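/- Let k ≥ 3 and let G be a connected k-regular graph of diameter 2 that is triangle-free and irreducible. Then the bipartite double cover B(G) is connected and its diameter equals 5. -/

import Mathlib

open SimpleGraph

/-- The bipartite double cover of a graph `G`, on vertex set `V ⊕ V`. -/
def bipartiteDoubleCover {V : Type*} (G : SimpleGraph V) : SimpleGraph (V ⊕ V) where
  Adj x y :=
    match x, y with
    | Sum.inl u, Sum.inr v => G.Adj u v
    | Sum.inr u, Sum.inl v => G.Adj u v
    | _, _ => False
  symm := ⟨by
    rintro (u | u) (v | v) h
    · exact h.elim
    · exact h.symm
    · exact h.symm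
    · exact h.elim⟩
  loopless := ⟨by
    rintro (u | u) h
    · exact h
    · exact h⟩

section Aux

variable {V : Type*} [Fintype V] {G : SimpleGraph V} [DecidableRel G.Adj] {k : ℕ}

private lemma nbr_subset_eq (hreg : G.IsRegularOfDegree k)
    (hirr : ∀ u v : V, G.neighborSet u = G.neighborSet v → u = v)
    {x u : V} (h : G.neighborFinset x ⊆ G.neighborFinset u) : x = u := by
  have heq : G.neighborFinset x = G.neighborFinset u :=
    Finset.eq_of_subset_of_card_le h
      (by show G.degree u ≤ G.degree x; rw [hreg u, hreg x])
  rw [neighborFinset_def, neighborFinset_def] at heq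
  exact hirr x u (Set.toFinset_inj.mp heq)

private lemma common_nbr (hconn : G.Connected) (hdiam : G.diam = 2)
    {u v : V} (hne : u ≠ v) (hnadj : ¬G.Adj u v) : ∃ m, G.Adj u m ∧ G.Adj m v := by
  have hne_top : G.ediam ≠ ⊤ := ediam_ne_top_of_diam_ne_zero (by omega)
  have hle : G.dist u v ≤ 2 := hdiam ▸ dist_le_diam hne_top
  have hpos : 0 < G.dist u v := hconn.pos_dist_of_ne hne
  have h1 : G.dist u v ≠ 1 := fun h => hnadj (dist_eq_one_iff_adj.mp h)
  have h2 : G.dist u v = 2 := by omega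
  obtain ⟨p, hp⟩ := hconn.exists_walk_length_eq_dist u v
  rw [h2] at hp
  cases p with
  | nil => simp at hp
  | cons h q =>
    cases q with
    | nil => simp at hp
    | cons h' r =>
      cases r with
      | nil => exact ⟨_, h, h'⟩
      | cons h'' s => simp [Walk.length_cons] at hp

private lemma far_edge (hk : 3 ≤ k) (hreg : G.IsRegularOfDegree k)
    (htf : ∀ u v : V, G.Adj u v → ∀ x : V, ¬(G.Adj u x ∧ G.Adj v x))
    (hirr : ∀ u v : V, G.neighborSet u = G.neighborSet v → u = v) (u : V) :
    ∃ b c, G.Adj b c ∧ b ≠ u ∧ ¬G.Adj u b ∧ c ≠ u ∧ ¬G.Adj u c := by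
  obtain ⟨a, ha⟩ : ∃ a, G.Adj u a := by
    have : 0 < (G.neighborFinset u).card := by
      show 0 < G.degree u; rw [hreg u]; omega
    obtain ⟨a, ha⟩ := Finset.card_pos.mp this
    exact ⟨a, (mem_neighborFinset _ _ _).mp ha⟩
  obtain ⟨x, hx, hxu⟩ : ∃ x ∈ G.neighborFinset a, x ≠ u := by
    apply Finset.exists_mem_ne
    show 1 < G.degree a; rw [hreg a]; omega
  have hax : G.Adj a x := (mem_neighborFinset _ _ _).mp hx
  have hux : ¬G.Adj u x := fun h => htf u a ha x ⟨h, hax⟩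
  by_contra hno
  push_neg at hno
  have hsub : G.neighborFinset x ⊆ G.neighborFinset u := by
    intro w hw
    have hxw : G.Adj x w := (mem_neighborFinset _ _ _).mp hw
    have hwu : w ≠ u := fun h => hux ((h ▸ hxw).symm)
    rw [mem_neighborFinset]
    exact hno x w hxw hxu hux hwu
  exact hxu (nbr_subset_eq hreg hirr hsub)

private lemma odd3 (hconn : G.Connected) (hdiam : G.diam = 2)
    (hreg : G.IsRegularOfDegree k)
    (hirr : ∀ u v : V, G.neighborSet u = G.neighborSet v → u = v)
    {u v : V} (hne : u ≠ v) (hnadj : ¬G.Adj u v) :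
    ∃ a m, G.Adj u a ∧ G.Adj a m ∧ G.Adj m v := by
  obtain ⟨a, hua, hanev, hanadj⟩ : ∃ a, G.Adj u a ∧ a ≠ v ∧ ¬G.Adj a v := by
    by_contra h
    push_neg at h
    have hsub : G.neighborFinset u ⊆ G.neighborFinset v := by
      intro w hw
      have huw : G.Adj u w := (mem_neighborFinset _ _ _).mp hw
      have hwv : w ≠ v := fun he => hnadj (he ▸ huw)
      rw [mem_neighborFinset]
      exact (h w huw hwv).symm
    exact hne (nbr_subset_eq hreg hirr hsub)
  obtain ⟨m, ham, hmv⟩ := common_nbr hconn hdiam hanev hanadj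
  exact ⟨a, m, hua, ham, hmv⟩

private lemma even4 (hk : 3 ≤ k) (hconn : G.Connected) (hdiam : G.diam = 2)
    (hreg : G.IsRegularOfDegree k)
    (htf : ∀ u v : V, G.Adj u v → ∀ x : V, ¬(G.Adj u x ∧ G.Adj v x))
    (hirr : ∀ u v : V, G.neighborSet u = G.neighborSet v → u = v)
    {u v : V} (hadj : G.Adj u v) :
    ∃ a b c, G.Adj u a ∧ G.Adj a b ∧ G.Adj b c ∧ G.Adj c v := by
  obtain ⟨b, hbu, hub, hbv, hvb⟩ :
      ∃ b, b ≠ u ∧ ¬G.Adj u b ∧ b ≠ v ∧ ¬G.Adj v b := by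
    obtain ⟨b, c, hbc, hbu, hub, hcu, huc⟩ := far_edge hk hreg htf hirr u
    have hbv : b ≠ v := fun h => hub (h ▸ hadj)
    have hcv : c ≠ v := fun h => huc (h ▸ hadj)
    by_cases h1 : G.Adj v b
    · by_cases h2 : G.Adj v c
      · exact absurd ⟨h2, hbc⟩ (htf v b h1 c)
      · exact ⟨c, hcu, huc, hcv, h2⟩
    · exact ⟨b, hbu, hub, hbv, h1⟩
  obtain ⟨a, hua, hab⟩ := common_nbr hconn hdiam (Ne.symm hbu) hub
  obtain ⟨c, hbc, hcv⟩ := common_nbr hconn hdiam hbv (fun h => hvb h.symm)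
  exact ⟨a, b, c, hua, hab, hbc, hcv⟩

private lemma closed5 (hk : 3 ≤ k) (hconn : G.Connected) (hdiam : G.diam = 2)
    (hreg : G.IsRegularOfDegree k)
    (htf : ∀ u v : V, G.Adj u v → ∀ x : V, ¬(G.Adj u x ∧ G.Adj v x))
    (hirr : ∀ u v : V, G.neighborSet u = G.neighborSet v → u = v) (u : V) :
    ∃ a b c d, G.Adj u a ∧ G.Adj a b ∧ G.Adj b c ∧ G.Adj c d ∧ G.Adj d u := by
  obtain ⟨b, c, hbc, hbu, hub, hcu, huc⟩ := far_edge hk hreg htf hirr u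
  obtain ⟨a, hua, hab⟩ := common_nbr hconn hdiam (Ne.symm hbu) hub
  obtain ⟨d, hcd, hdu⟩ := common_nbr hconn hdiam hcu (fun h => huc h.symm)
  exact ⟨a, b, c, d, hua, hab, hbc, hcd, hdu⟩

/-- Side of a vertex of the double cover. -/
private def side {V : Type*} : V ⊕ V → Bool := fun x =>
  match x with
  | .inl _ => false
  | .inr _ => true

private lemma bdc_adj_side {x y : V ⊕ V} (h : (_root_.bipartiteDoubleCover G).Adj x y) :
    side x ≠ side y := by
  match x, y, h with
  | .inl _, .inl _, h => exact h.elim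
  | .inl _, .inr _, _ => simp [side]
  | .inr _, .inl _, _ => simp [side]
  | .inr _, .inr _, h => exact h.elim

private lemma bdc_parity {x y : V ⊕ V} (p : (_root_.bipartiteDoubleCover G).Walk x y) :
    Even p.length ↔ side x = side y := by
  induction p with
  | nil => simp
  | @cons x m y h q ih =>
    rw [Walk.length_cons, Nat.even_add_one, ih]
    have hxm := bdc_adj_side h
    revert hxm
    cases side x <;> cases side m <;> cases side y <;> simp

private lemma no_short (htf : ∀ u v : V, G.Adj u v → ∀ x : V, ¬(G.Adj u x ∧ G.Adj v x))
    (u : V) (p : (_root_.bipartiteDoubleCover G).Walk (Sum.inl u) (Sum.inr u)) :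
    5 ≤ p.length := by
  have hodd : ¬ Even p.length := by
    rw [bdc_parity]; simp [side]
  rw [Nat.not_even_iff] at hodd
  have h1 : p.length ≠ 1 := by
    intro hlen
    cases p with
    | cons h q =>
      cases q with
      | nil => exact G.loopless.irrefl u h
      | cons h' r => simp [Walk.length_cons] at hlen
  have h3 : p.length ≠ 3 := by
    intro hlen
    cases p with
    | @cons _ m1 _ h q =>
      cases m1 with
      | inl a => exact h.elim
      | inr a =>
        cases q with
        | nil => simp at hlen
        | @cons _ m2 _ h' r =>
          cases m2 with
          | inr b => exact h'.elim
          | inl b =>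
            cases r with
            | @cons _ m3 _ h'' s =>
              cases m3 with
              | inl c => exact h''.elim
              | inr c =>
                cases s with
                | nil =>
                  -- h : G.Adj u a, h' : G.Adj a b, h'' : G.Adj b u (since c = u forced? no)
                  -- s : Walk (inr c) (inr u) nil means c = u
                  exact htf u a h b ⟨(h'' : G.Adj b u).symm, h'⟩
                | cons h''' t => simp [Walk.length_cons] at hlen
  omega

end Aux

theorem stmt2 {V : Type*} [Fintype V] (G : SimpleGraph V) [DecidableRel G.Adj] (k : ℕ) (hk : 3 ≤ k)
    (hconn : G.Connected) (hreg : G.IsRegularOfDegree k) (hdiam : G.diam = 2)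
    (htf : ∀ u v : V, G.Adj u v → ∀ x : V, ¬(G.Adj u x ∧ G.Adj v x))
    (hirr : ∀ u v : V, G.neighborSet u = G.neighborSet v → u = v) :
    (_root_.bipartiteDoubleCover G).Connected ∧ (_root_.bipartiteDoubleCover G).diam = 5 := by
  have hlr : ∀ u v : V, (_root_.bipartiteDoubleCover G).edist (Sum.inl u) (Sum.inr v) ≤ 5 := by
    intro u v
    rcases eq_or_ne u v with rfl | hne
    · obtain ⟨a, b, c, d, h1, h2, h3, h4, h5⟩ := closed5 hk hconn hdiam hreg htf hirr u
      have w1 : (_root_.bipartiteDoubleCover G).Adj (Sum.inl u) (Sum.inr a) := h1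
      have w2 : (_root_.bipartiteDoubleCover G).Adj (Sum.inr a) (Sum.inl b) := h2
      have w3 : (_root_.bipartiteDoubleCover G).Adj (Sum.inl b) (Sum.inr c) := h3
      have w4 : (_root_.bipartiteDoubleCover G).Adj (Sum.inr c) (Sum.inl d) := h4
      have w5 : (_root_.bipartiteDoubleCover G).Adj (Sum.inl d) (Sum.inr u) := h5
      refine le_trans (edist_le (Walk.cons w1 (Walk.cons w2 (Walk.cons w3
        (Walk.cons w4 (Walk.cons w5 Walk.nil)))))) ?_
      simp only [Walk.length_cons, Walk.length_nil]
      norm_num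
    · by_cases hadj : G.Adj u v
      · have w1 : (_root_.bipartiteDoubleCover G).Adj (Sum.inl u) (Sum.inr v) := hadj
        refine le_trans (edist_le (Walk.cons w1 Walk.nil)) ?_
        simp only [Walk.length_cons, Walk.length_nil]
        norm_num
      · obtain ⟨a, m, h1, h2, h3⟩ := odd3 hconn hdiam hreg hirr hne hadj
        have w1 : (_root_.bipartiteDoubleCover G).Adj (Sum.inl u) (Sum.inr a) := h1
        have w2 : (_root_.bipartiteDoubleCover G).Adj (Sum.inr a) (Sum.inl m) := h2
        have w3 : (_root_.bipartiteDoubleCover G).Adj (Sum.inl m) (Sum.inr v) := h3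
        refine le_trans (edist_le (Walk.cons w1 (Walk.cons w2 (Walk.cons w3 Walk.nil)))) ?_
        simp only [Walk.length_cons, Walk.length_nil]
        norm_num
  have hll : ∀ u v : V, (_root_.bipartiteDoubleCover G).edist (Sum.inl u) (Sum.inl v) ≤ 5 := by
    intro u v
    rcases eq_or_ne u v with rfl | hne
    · simp
    · by_cases hadj : G.Adj u v
      · obtain ⟨a, b, c, h1, h2, h3, h4⟩ := even4 hk hconn hdiam hreg htf hirr hadj
        have w1 : (_root_.bipartiteDoubleCover G).Adj (Sum.inl u) (Sum.inr a) := h1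
        have w2 : (_root_.bipartiteDoubleCover G).Adj (Sum.inr a) (Sum.inl b) := h2
        have w3 : (_root_.bipartiteDoubleCover G).Adj (Sum.inl b) (Sum.inr c) := h3
        have w4 : (_root_.bipartiteDoubleCover G).Adj (Sum.inr c) (Sum.inl v) := h4
        refine le_trans (edist_le (Walk.cons w1 (Walk.cons w2 (Walk.cons w3
          (Walk.cons w4 Walk.nil))))) ?_
        simp only [Walk.length_cons, Walk.length_nil]
        norm_num
      · obtain ⟨m, h1, h2⟩ := common_nbr hconn hdiam hne hadj
        have w1 : (_root_.bipartiteDoubleCover G).Adj (Sum.inl u) (Sum.inr m) := h1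
        have w2 : (_root_.bipartiteDoubleCover G).Adj (Sum.inr m) (Sum.inl v) := h2
        refine le_trans (edist_le (Walk.cons w1 (Walk.cons w2 Walk.nil))) ?_
        simp only [Walk.length_cons, Walk.length_nil]
        norm_num
  have hrr : ∀ u v : V, (_root_.bipartiteDoubleCover G).edist (Sum.inr u) (Sum.inr v) ≤ 5 := by
    intro u v
    rcases eq_or_ne u v with rfl | hne
    · simp
    · by_cases hadj : G.Adj u v
      · obtain ⟨a, b, c, h1, h2, h3, h4⟩ := even4 hk hconn hdiam hreg htf hirr hadj
        have w1 : (_root_.bipartiteDoubleCover G).Adj (Sum.inr u) (Sum.inl a) := h1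
        have w2 : (_root_.bipartiteDoubleCover G).Adj (Sum.inl a) (Sum.inr b) := h2
        have w3 : (_root_.bipartiteDoubleCover G).Adj (Sum.inr b) (Sum.inl c) := h3
        have w4 : (_root_.bipartiteDoubleCover G).Adj (Sum.inl c) (Sum.inr v) := h4
        refine le_trans (edist_le (Walk.cons w1 (Walk.cons w2 (Walk.cons w3
          (Walk.cons w4 Walk.nil))))) ?_
        simp only [Walk.length_cons, Walk.length_nil]
        norm_num
      · obtain ⟨m, h1, h2⟩ := common_nbr hconn hdiam hne hadj
        have w1 : (_root_.bipartiteDoubleCover G).Adj (Sum.inr u) (Sum.inl m) := h1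
        have w2 : (_root_.bipartiteDoubleCover G).Adj (Sum.inl m) (Sum.inr v) := h2
        refine le_trans (edist_le (Walk.cons w1 (Walk.cons w2 Walk.nil))) ?_
        simp only [Walk.length_cons, Walk.length_nil]
        norm_num
  have hub : ∀ x y : V ⊕ V, (_root_.bipartiteDoubleCover G).edist x y ≤ 5 := by
    rintro (u | u) (v | v)
    · exact hll u v
    · exact hlr u v
    · rw [SimpleGraph.edist_comm]; exact hlr v u
    · exact hrr u v
  have hreach : ∀ x y : V ⊕ V, (_root_.bipartiteDoubleCover G).Reachable x y := by
    intro x y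
    apply reachable_of_edist_ne_top
    intro h
    have h5 := hub x y
    rw [h] at h5
    exact absurd h5 (by decide)
  obtain ⟨u⟩ : Nonempty V := hconn.nonempty
  have hlow : (5 : ℕ∞) ≤ (_root_.bipartiteDoubleCover G).edist (Sum.inl u) (Sum.inr u) := by
    rw [edist_eq_sInf]
    refine le_sInf ?_
    rintro _ ⟨p, rfl⟩
    show (5 : ℕ∞) ≤ (p.length : ℕ∞)
    exact_mod_cast no_short htf u p
  have hediam : (_root_.bipartiteDoubleCover G).ediam = 5 := by
    refine le_antisymm (ediam_le_of_edist_le fun a b => hub a b) ?_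
    exact le_trans hlow edist_le_ediam
  haveI : Nonempty (V ⊕ V) := ⟨Sum.inl u⟩
  refine ⟨⟨hreach⟩, ?_⟩
  show ((_root_.bipartiteDoubleCover G).ediam).toNat = 5
  rw [hediam]
  rfl
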